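/- Let X be a compact Hausdorff space. Then for every max-min measure μ on X, every φ ∈ C(X) and every c > 0, the inequalities μ(φ + c_X) ≤ μ(φ) + c and μ(φ) - c ≤ μ(φ - c_X) hold, where c_X denotes the constant function with value c. -/

import Mathlib

def IsMaxMinMeasure {X : Type*} [TopologicalSpace X] (μ : C(X, ℝ) → ℝ) : Prop :=
  (∀ c : ℝ, μ (ContinuousMap.const X c) = c) ∧
  (∀ φ ψ : C(X, ℝ), μ (φ ⊔ ψ) = max (μ φ) (μ ψ)) ∧
  (∀ (c : ℝ) (φ : C(X, ℝ)), μ (ContinuousMap.const X c ⊓ φ) = min c (μ φ))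

lemma maxMinMeasure_add_const_le
    {X : Type*} [TopologicalSpace X] [CompactSpace X]
    (μ : C(X, ℝ) → ℝ) (hμ : IsMaxMinMeasure μ) (φ : C(X, ℝ)) (c : ℝ) (hc : 0 < c) :
    μ (φ + ContinuousMap.const X c) ≤ μ φ + c := by
  obtain ⟨h1, h2, h3⟩ := hμ
  have mono : ∀ ψ χ : C(X, ℝ), ψ ≤ χ → μ ψ ≤ μ χ := by
    intro ψ χ h
    have h' := h2 ψ χ
    rw [sup_eq_right.mpr h] at h'
    rw [h']
    exact le_max_left _ _
  rcases isEmpty_or_nonempty X with hX | hX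
  · exfalso
    have h0 := h1 0
    have h1' := h1 1
    have heq : (ContinuousMap.const X (0:ℝ)) = ContinuousMap.const X 1 := by
      ext x; exact (hX.false x).elim
    rw [heq, h1'] at h0
    norm_num at h0
  · obtain ⟨xm, -, hxm⟩ := isCompact_univ.exists_isMinOn (Set.univ_nonempty)
      (φ.continuous.continuousOn)
    obtain ⟨xM, -, hxM⟩ := isCompact_univ.exists_isMaxOn (Set.univ_nonempty)
      (φ.continuous.continuousOn)
    set m := φ xm with hm_def
    set M := φ xM with hM_def
    have hm : ∀ x, m ≤ φ x := fun x => isMinOn_iff.mp hxm x (Set.mem_univ x)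
    have hM : ∀ x, φ x ≤ M := fun x => isMaxOn_iff.mp hxM x (Set.mem_univ x)
    set a := μ φ with ha_def
    set b := μ (φ + ContinuousMap.const X c) with hb_def
    have key : ∀ t, t < b → ∀ δ, 0 < δ → t - c - δ ≤ a := by
      intro t ht δ hδ
      set L : ℝ := (M + c - m) / δ with hL_def
      have hMm : m ≤ M := hm xM
      have hL : 0 < L := div_pos (by linarith) hδ
      have hLδ : L * δ = M + c - m := div_mul_cancel₀ _ (ne_of_gt hδ)
      set t'' : ℝ := t - c - δ with ht''_def
      set lin : C(X, ℝ) :=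
        ContinuousMap.const X m + L • (φ - ContinuousMap.const X t'') with hlin_def
      set ψ₂ : C(X, ℝ) :=
        ContinuousMap.const X m ⊔ ((φ + ContinuousMap.const X c) ⊓ lin) with hψ₂_def
      set ψ₁ : C(X, ℝ) :=
        ContinuousMap.const X t ⊓ (φ + ContinuousMap.const X c) with hψ₁_def
      have hψ₂x : ∀ x, ψ₂ x = max m (min (φ x + c) (m + L * (φ x - t''))) := by
        intro x
        simp [hψ₂_def, hlin_def, max_def, min_def]
      have hA : ψ₁ ⊔ ψ₂ = φ + ContinuousMap.const X c := by
        ext x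
        have h2x : ψ₂ x = max m (min (φ x + c) (m + L * (φ x - t''))) := hψ₂x x
        simp only [ContinuousMap.sup_apply, ContinuousMap.inf_apply,
          ContinuousMap.add_apply, ContinuousMap.const_apply, hψ₁_def]
        rw [h2x]
        rcases le_or_gt (φ x + c) t with h | h
        · rw [min_eq_right h]
          apply max_eq_left
          apply max_le
          · linarith [hm x]
          · exact min_le_left _ _
        · have hd : δ ≤ φ x - t'' := by
            simp only [ht''_def]; linarith
          have hlx : φ x + c ≤ m + L * (φ x - t'') := by
            have h5 : L * δ ≤ L * (φ x - t'') := mul_le_mul_of_nonneg_left hd hL.le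
            rw [hLδ] at h5
            linarith [hM x]
          rw [min_eq_left hlx, max_eq_right (by linarith [hm x] : m ≤ φ x + c)]
          exact max_eq_right (min_le_right _ _)
      have hB : ContinuousMap.const X t'' ⊓ ψ₂ ≤ φ := by
        rw [ContinuousMap.le_def]
        intro x
        have h2x : ψ₂ x = max m (min (φ x + c) (m + L * (φ x - t''))) := hψ₂x x
        simp only [ContinuousMap.inf_apply, ContinuousMap.const_apply]
        rw [h2x]
        rcases le_or_gt t'' (φ x) with h | h
        · exact le_trans (min_le_left _ _) h
        · have hlx : m + L * (φ x - t'') < m := by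
            have : L * (φ x - t'') < 0 := mul_neg_of_pos_of_neg hL (by linarith)
            linarith
          have hmin : min (φ x + c) (m + L * (φ x - t'')) ≤ m :=
            le_trans (min_le_right _ _) hlx.le
          calc min t'' (max m (min (φ x + c) (m + L * (φ x - t''))))
              ≤ max m (min (φ x + c) (m + L * (φ x - t''))) := min_le_right _ _
            _ = m := max_eq_left hmin
            _ ≤ φ x := hm x
      have hb2 : μ ψ₂ = b := by
        have h' := h2 ψ₁ ψ₂
        rw [hA] at h'
        have hψ₁' : μ ψ₁ = min t b := h3 t (φ + ContinuousMap.const X c)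
        rw [hψ₁', min_eq_left ht.le] at h'
        rcases le_or_gt (μ ψ₂) t with h | h
        · rw [max_eq_left h] at h'
          linarith
        · rw [max_eq_right h.le] at h'
          exact h'.symm
      have hcap : μ (ContinuousMap.const X t'' ⊓ ψ₂) = t'' := by
        rw [h3, hb2, min_eq_left (by simp only [ht''_def]; linarith)]
      have hfin := mono _ _ hB
      rw [hcap] at hfin
      exact hfin
    by_contra hcon
    push_neg at hcon
    have hε : 0 < (b - (a + c)) / 4 := by linarith
    have := key (b - (b - (a + c)) / 4) (by linarith) ((b - (a + c)) / 4) hε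
    linarith

/-- on any compact Hausdorff space, every max-min measure satisfies
`μ(φ + c) ≤ μ(φ) + c` and `μ(φ) - c ≤ μ(φ - c)` for every `c > 0`. -/
theorem maxMinMeasure_translation_ineq
    {X : Type*} [TopologicalSpace X] [CompactSpace X] [T2Space X]
    (μ : C(X, ℝ) → ℝ) (hμ : IsMaxMinMeasure μ) (φ : C(X, ℝ)) (c : ℝ) (hc : 0 < c) :
    μ (φ + ContinuousMap.const X c) ≤ μ φ + c ∧
      μ φ - c ≤ μ (φ - ContinuousMap.const X c) := by
  constructor
  · exact maxMinMeasure_add_const_le μ hμ φ c hc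
  · have h := maxMinMeasure_add_const_le μ hμ (φ - ContinuousMap.const X c) c hc
    have heq : (φ - ContinuousMap.const X c) + ContinuousMap.const X c = φ := by
      ext x; simp
    rw [heq] at h
    linarith
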